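/- Fix v > 0. For each z ∈ ℂ with Im z ≠ 0, there exists exactly one w ∈ ℂ satisfying w = 1/(−z − v² w) together with Im w · Im z > 0, and this unique solution equals the Stieltjes transform of the semicircle distribution: w = ∫_{−2v}^{2v} (λ − z)^{−1} ρ_sc(λ) dλ, where ρ_sc(λ) = (1/(2πv²))·√(4v² − λ²) for |λ| ≤ 2v. -/

import Mathlib

open Complex Real

theorem aux_int_inv (c : ℂ) (hc : c.im ≠ 0) :
    ∫ t in (-1:ℝ)..1, ((t:ℂ) - c)⁻¹ = Complex.log (1 - c) - Complex.log (-1 - c) := by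
  have hne : ∀ t : ℝ, (t:ℂ) - c ≠ 0 := by
    intro t h
    apply hc
    have := congrArg Complex.im h
    simpa using this.symm
  have hcont : Continuous (fun t : ℝ => ((t:ℂ) - c)⁻¹) :=
    ((Complex.continuous_ofReal.sub continuous_const).inv₀ hne)
  have := intervalIntegral.integral_eq_sub_of_hasDerivAt
    (f := fun t : ℝ => Complex.log ((t:ℂ) - c))
    (f' := fun t : ℝ => ((t:ℂ) - c)⁻¹) (a := (-1:ℝ)) (b := 1)
    (fun t _ => by
      have h1 : HasDerivAt (fun t : ℝ => (t:ℂ) - c) 1 t := by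
        simpa using ((hasDerivAt_id t).ofReal_comp.sub_const c)
      have h2 : ((t:ℂ) - c) ∈ Complex.slitPlane := by
        rw [Complex.mem_slitPlane_iff]
        right; simpa using hc
      simpa [one_div] using h1.clog_real h2)
    (hcont.intervalIntegrable _ _)
  simpa using this

theorem aux_im_log_sub (x y : ℂ) (h : 0 < x.im * y.im) :
    |(Complex.log x - Complex.log y).im| < π := by
  have hx : x.im ≠ 0 := fun h0 => by simp [h0] at h
  have hy : y.im ≠ 0 := fun h0 => by simp [h0] at h
  have key : ∀ w : ℂ, w.im ≠ 0 → (0 < w.im → 0 < arg w ∧ arg w < π) ∧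
      (w.im < 0 → -π < arg w ∧ arg w < 0) := by
    intro w hw
    constructor
    · intro hpos
      refine ⟨lt_of_le_of_ne (Complex.arg_nonneg_iff.2 hpos.le) ?_, ?_⟩
      · intro h0
        have := Complex.arg_eq_zero_iff.1 h0.symm
        exact hw this.2
      · exact (Complex.arg_lt_pi_iff).2 (Or.inr hw)
    · intro hneg
      exact ⟨Complex.neg_pi_lt_arg w, Complex.arg_neg_iff.2 hneg⟩
  simp only [Complex.sub_im, Complex.log_im]
  rcases lt_or_gt_of_ne hx with hx' | hx'
  · have hy' : y.im < 0 := by nlinarith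
    have h1 := ((key x hx).2 hx')
    have h2 := ((key y hy).2 hy')
    rw [abs_lt]; constructor <;> nlinarith
  · have hy' : 0 < y.im := by nlinarith
    have h1 := ((key x hx).1 hx')
    have h2 := ((key y hy).1 hy')
    rw [abs_lt]; constructor <;> nlinarith

theorem aux_L_sq (L : ℂ) (h1 : Complex.exp L = -1) (h2 : |L.im| < 2 * π) :
    L ^ 2 = -(π:ℂ) ^ 2 := by
  have h3 : Complex.exp (L - π * I) = 1 := by
    rw [Complex.exp_sub, h1, Complex.exp_pi_mul_I]
    norm_num
  obtain ⟨n, hn⟩ := Complex.exp_eq_one_iff.1 h3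
  have hL : L = (2 * n + 1) * π * I := by
    have : L = n * (2 * π * I) + π * I := by linear_combination hn
    rw [this]; push_cast; ring
  have him : L.im = (2 * (n:ℝ) + 1) * π := by
    rw [hL]; simp
  rw [him] at h2
  have hπ := Real.pi_pos
  have habs : |2 * (n:ℝ) + 1| < 2 := by
    rw [abs_mul, abs_of_pos hπ] at h2
    nlinarith [abs_nonneg (2 * (n:ℝ) + 1)]
  have hn2 : n = 0 ∨ n = -1 := by
    rcases abs_lt.1 habs with ⟨hl, hr⟩
    have : (-2:ℝ) < 2*n+1 := hl
    have h1' : (-2:ℤ) < 2*n+1 := by exact_mod_cast this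
    have h2' : (2*n+1 : ℤ) < 2 := by exact_mod_cast hr
    omega
  rcases hn2 with h | h <;> rw [hL, h] <;> push_cast <;> ring_nf <;>
    simp [Complex.I_sq] <;> ring

theorem aux_alg (A D r u1 u2 : ℂ) (hA : A ≠ 0) (hD : D ≠ 0) (hr : r ≠ 0)
    (h1 : u1 ≠ 0) (h2 : u2 ≠ 0)
    (key : 2 * r * u2 * u1 = (u1 - u2) * (A * D)) :
    2 * A⁻¹ * D⁻¹ = r⁻¹ * (u2⁻¹ - u1⁻¹) := by
  field_simp
  linear_combination key

theorem aux_J (v : ℝ) (hv : 0 < v) (z : ℂ) (hz : z.im ≠ 0) :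
    ∃ S : ℂ, S ^ 2 = (π:ℂ) ^ 2 * (z ^ 2 - 4 * v ^ 2) ∧
      (4 * (v:ℂ) ^ 2 - z ^ 2) *
        (∫ θ in (-(π/2))..(π/2), (((2 * v * Real.sin θ : ℝ) : ℂ) - z)⁻¹) = S := by
  have hz0 : z ≠ 0 := fun h => hz (by simp [h])
  have hrz : (4 * (v:ℂ)^2 - z^2) ≠ 0 := by
    intro h
    have h2 : (((2*v:ℝ):ℂ) - z) * (((2*v:ℝ):ℂ) + z) = 0 := by push_cast; linear_combination h
    rcases mul_eq_zero.1 h2 with h' | h'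
    · apply hz
      have : z = ((2*v:ℝ):ℂ) := by linear_combination -h'
      rw [this]; simp
    · apply hz
      have : z = -((2*v:ℝ):ℂ) := by linear_combination h'
      rw [this]; simp
  obtain ⟨r, hr⟩ : ∃ r : ℂ, r^2 = 4 * (v:ℂ)^2 - z^2 := by
    refine ⟨(4 * (v:ℂ)^2 - z^2) ^ ((((2:ℕ)):ℂ))⁻¹, ?_⟩
    exact_mod_cast Complex.cpow_nat_inv_pow _ two_ne_zero
  have hr0 : r ≠ 0 := fun h => hrz (by rw [← hr, h]; ring)
  set t₁ : ℂ := (2*v + r)/z with ht₁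
  set t₂ : ℂ := (2*v - r)/z with ht₂
  have hprod : t₁ * t₂ = 1 := by
    rw [ht₁, ht₂]; field_simp; linear_combination -hr
  have hnonreal : ∀ w : ℂ, z * (w^2+1) = 4*v*w → w.im ≠ 0 := by
    intro w heq him
    have hwre : w = ((w.re : ℝ) : ℂ) := Complex.ext rfl (by simpa using him)
    rw [hwre] at heq
    have h2 : z * (((w.re^2 + 1 : ℝ)):ℂ) = ((4*v*w.re : ℝ):ℂ) := by
      push_cast; linear_combination heq
    set c : ℝ := w.re^2 + 1 with hc
    have h3 : z.im * c = 0 := by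
      have h5 := congrArg Complex.im h2
      simpa [Complex.mul_im] using h5
    have h4 : (0:ℝ) < c := by rw [hc]; positivity
    exact hz (by nlinarith)
  have heq1 : z * (t₁^2 + 1) = 4*v*t₁ := by
    rw [ht₁]; field_simp; linear_combination hr
  have heq2 : z * (t₂^2 + 1) = 4*v*t₂ := by
    rw [ht₂]; field_simp; linear_combination hr
  have h1im : t₁.im ≠ 0 := hnonreal t₁ heq1
  have h2im : t₂.im ≠ 0 := hnonreal t₂ heq2
  have hne1 : ∀ t : ℝ, (t:ℂ) - t₁ ≠ 0 := by
    intro t h; exact h1im (by have := congrArg Complex.im h; simpa using this.symm)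
  have hne2 : ∀ t : ℝ, (t:ℂ) - t₂ ≠ 0 := by
    intro t h; exact h2im (by have := congrArg Complex.im h; simpa using this.symm)
  -- substitution θ = 2 arctan t
  have hsubst :
      (∫ θ in (-(π/2))..(π/2), (((2 * v * Real.sin θ : ℝ) : ℂ) - z)⁻¹)
      = ∫ t in (-1:ℝ)..1, (2 * (1 + t^2)⁻¹) •
          (((2 * v * Real.sin (2 * Real.arctan t) : ℝ) : ℂ) - z)⁻¹ := by
    have hg : Continuous (fun θ : ℝ => (((2 * v * Real.sin θ : ℝ) : ℂ) - z)⁻¹) := by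
      apply Continuous.inv₀
      · exact (Complex.continuous_ofReal.comp
          (continuous_const.mul Real.continuous_sin)).sub continuous_const
      · intro θ h
        exact hz (by have := congrArg Complex.im h; simpa using this.symm)
    have hf'cont : Continuous (fun t : ℝ => 2 * (1 + t^2)⁻¹) := by
      exact continuous_const.mul ((continuous_const.add (continuous_pow 2)).inv₀
        (fun x => by simp only [Pi.add_apply]; positivity))
    have key := intervalIntegral.integral_comp_smul_deriv
      (f := fun t : ℝ => 2 * Real.arctan t)
      (f' := fun t : ℝ => 2 * (1 + t^2)⁻¹)
      (g := fun θ : ℝ => (((2 * v * Real.sin θ : ℝ) : ℂ) - z)⁻¹)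
      (a := (-1:ℝ)) (b := 1)
      (fun t _ => by simpa [one_div] using (Real.hasDerivAt_arctan t).const_mul 2)
      hf'cont.continuousOn hg
    have e1 : 2 * Real.arctan (-1) = -(π/2) := by
      rw [Real.arctan_neg, Real.arctan_one]; ring
    have e2 : 2 * Real.arctan 1 = π/2 := by rw [Real.arctan_one]; ring
    rw [← e1]
    rw [← e2]
    exact key.symm
  have hpoint : ∀ t : ℝ,
      (2 * (1 + t^2)⁻¹) • (((2 * v * Real.sin (2 * Real.arctan t) : ℝ) : ℂ) - z)⁻¹
      = r⁻¹ * (((t:ℂ) - t₂)⁻¹ - ((t:ℂ) - t₁)⁻¹) := by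
    intro t
    have h1t : (0:ℝ) < 1 + t^2 := by positivity
    have hsq : Real.sqrt (1+t^2) * Real.sqrt (1+t^2) = 1+t^2 :=
      Real.mul_self_sqrt (by positivity)
    have hsin : Real.sin (2 * Real.arctan t) = 2 * t / (1 + t^2) := by
      rw [Real.sin_two_mul, Real.sin_arctan, Real.cos_arctan]
      rw [show (2:ℝ) * (t / Real.sqrt (1+t^2)) * (1 / Real.sqrt (1+t^2))
          = 2*t/(Real.sqrt (1+t^2) * Real.sqrt (1+t^2)) from by ring, hsq]
    rw [hsin]
    have h1tc : ((1:ℂ) + (t:ℂ)^2) ≠ 0 := by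
      have he : ((1:ℂ) + (t:ℂ)^2) = ((1 + t^2 : ℝ) : ℂ) := by push_cast; ring
      rw [he, Ne, Complex.ofReal_eq_zero]
      positivity
    have hDne : (2 * (v:ℂ) * (2 * t / (1 + (t:ℂ)^2)) : ℂ) - z ≠ 0 := by
      intro h
      apply hz
      have := congrArg Complex.im h
      simp only [Complex.sub_im, Complex.zero_im] at this
      have him2 : (2 * (v:ℂ) * (2 * (t:ℂ) / (1 + (t:ℂ)^2))).im = 0 := by
        have : (2 * (v:ℂ) * (2 * (t:ℂ) / (1 + (t:ℂ)^2))) = ((2*v*(2*t/(1+t^2)) : ℝ) : ℂ) := by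
          push_cast; ring
        rw [this]; exact Complex.ofReal_im _
      linarith [him2 ▸ this]
    rw [Complex.real_smul]
    push_cast
    rw [ht₁, ht₂]
    apply aux_alg _ _ _ _ _ h1tc hDne hr0 (by rw [ht₁] at hne1; exact hne1 t)
      (by rw [ht₂] at hne2; exact hne2 t)
    field_simp
    ring_nf
    linear_combination (-2*r) * hr
  have hcont1 : Continuous fun t : ℝ => ((t:ℂ) - t₁)⁻¹ :=
    (Complex.continuous_ofReal.sub continuous_const).inv₀ hne1
  have hcont2 : Continuous fun t : ℝ => ((t:ℂ) - t₂)⁻¹ :=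
    (Complex.continuous_ofReal.sub continuous_const).inv₀ hne2
  have hx1 : (1:ℂ) - t₁ ≠ 0 := by simpa using hne1 1
  have hy1 : (-1:ℂ) - t₁ ≠ 0 := by simpa using hne1 (-1)
  have hx2 : (1:ℂ) - t₂ ≠ 0 := by simpa using hne2 1
  have hy2 : (-1:ℂ) - t₂ ≠ 0 := by simpa using hne2 (-1)
  set L : ℂ := Complex.log (1 - t₂) - Complex.log (-1 - t₂) -
      (Complex.log (1 - t₁) - Complex.log (-1 - t₁)) with hL
  have hexp : Complex.exp L = -1 := by
    rw [hL, Complex.exp_sub, Complex.exp_sub, Complex.exp_sub,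
      Complex.exp_log hx2, Complex.exp_log hy2, Complex.exp_log hx1, Complex.exp_log hy1]
    field_simp
    linear_combination 2 * hprod
  have him : |L.im| < 2 * π := by
    have b2 := aux_im_log_sub (1 - t₂) (-1 - t₂) (by
      have he : ((1:ℂ)-t₂).im * ((-1:ℂ)-t₂).im = t₂.im^2 := by
        simp [Complex.sub_im]; ring
      rw [he]; exact pow_two_pos_of_ne_zero h2im)
    have b1 := aux_im_log_sub (1 - t₁) (-1 - t₁) (by
      have he : ((1:ℂ)-t₁).im * ((-1:ℂ)-t₁).im = t₁.im^2 := by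
        simp [Complex.sub_im]; ring
      rw [he]; exact pow_two_pos_of_ne_zero h1im)
    have hLim : L.im = (Complex.log (1 - t₂) - Complex.log (-1 - t₂)).im -
        (Complex.log (1 - t₁) - Complex.log (-1 - t₁)).im := by
      rw [hL]; simp
    rw [hLim]
    have habs := abs_sub (Complex.log (1 - t₂) - Complex.log (-1 - t₂)).im
      (Complex.log (1 - t₁) - Complex.log (-1 - t₁)).im
    linarith
  have hL2 := aux_L_sq L hexp him
  refine ⟨r * L, ?_, ?_⟩
  · linear_combination (-(π:ℂ)^2) * hr + r^2 * hL2
  · rw [hsubst]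
    simp only [hpoint]
    rw [intervalIntegral.integral_const_mul,
      intervalIntegral.integral_sub (hcont2.intervalIntegrable _ _)
        (hcont1.intervalIntegrable _ _),
      aux_int_inv t₂ h2im, aux_int_inv t₁ h1im]
    rw [← hr, hL]
    field_simp

theorem aux_quad (v : ℝ) (hv : 0 < v) (z : ℂ) (hz : z.im ≠ 0) :
    (v:ℂ)^2 * (∫ l in Set.Icc (-(2 * v)) (2 * v),
        ((l : ℂ) - z)⁻¹ * ((1 / (2 * Real.pi * v ^ 2) * Real.sqrt (4 * v ^ 2 - l ^ 2) : ℝ) : ℂ))^2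
      + z * (∫ l in Set.Icc (-(2 * v)) (2 * v),
        ((l : ℂ) - z)⁻¹ * ((1 / (2 * Real.pi * v ^ 2) * Real.sqrt (4 * v ^ 2 - l ^ 2) : ℝ) : ℂ))
      + 1 = 0 := by
  have hπ := Real.pi_pos
  have hlz : ∀ l : ℝ, (l:ℂ) - z ≠ 0 := by
    intro l h; exact hz (by have := congrArg Complex.im h; simpa using this.symm)
  -- step 1 : as interval integral with constant pulled out
  have step1 : (∫ l in Set.Icc (-(2 * v)) (2 * v),
        ((l : ℂ) - z)⁻¹ * ((1 / (2 * Real.pi * v ^ 2) * Real.sqrt (4 * v ^ 2 - l ^ 2) : ℝ) : ℂ))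
      = ((1 / (2 * Real.pi * v ^ 2) : ℝ) : ℂ) *
        ∫ l in (-(2*v))..(2*v), ((Real.sqrt (4 * v ^ 2 - l ^ 2) : ℝ) : ℂ) * ((l:ℂ) - z)⁻¹ := by
    rw [MeasureTheory.integral_Icc_eq_integral_Ioc,
      ← intervalIntegral.integral_of_le (by linarith : -(2*v) ≤ 2*v),
      ← intervalIntegral.integral_const_mul]
    apply intervalIntegral.integral_congr
    intro l _
    push_cast
    ring
  rw [step1]
  -- step 2 : substitution l = 2 v sin θ
  have hfcont : Continuous (fun l : ℝ => ((Real.sqrt (4 * v ^ 2 - l ^ 2) : ℝ) : ℂ) * ((l:ℂ) - z)⁻¹) := by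
    apply Continuous.mul
    · exact Complex.continuous_ofReal.comp
        (Real.continuous_sqrt.comp (by continuity))
    · exact (Complex.continuous_ofReal.sub continuous_const).inv₀ hlz
  have step2 : (∫ l in (-(2*v))..(2*v), ((Real.sqrt (4 * v ^ 2 - l ^ 2) : ℝ) : ℂ) * ((l:ℂ) - z)⁻¹)
      = ∫ θ in (-(π/2))..(π/2), (2*v*Real.cos θ) •
          (((Real.sqrt (4 * v ^ 2 - (2*v*Real.sin θ) ^ 2) : ℝ) : ℂ) * (((2*v*Real.sin θ:ℝ):ℂ) - z)⁻¹) := by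
    have key := intervalIntegral.integral_comp_smul_deriv
      (f := fun θ : ℝ => 2*v*Real.sin θ)
      (f' := fun θ : ℝ => 2*v*Real.cos θ)
      (g := fun l : ℝ => ((Real.sqrt (4 * v ^ 2 - l ^ 2) : ℝ) : ℂ) * ((l:ℂ) - z)⁻¹)
      (a := -(π/2)) (b := π/2)
      (fun θ _ => by simpa using (Real.hasDerivAt_sin θ).const_mul (2*v))
      (continuous_const.mul Real.continuous_cos).continuousOn hfcont
    have e1 : 2*v*Real.sin (-(π/2)) = -(2*v) := by simp
    have e2 : 2*v*Real.sin (π/2) = 2*v := by simp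
    beta_reduce at key
    rw [e1, e2] at key
    exact key.symm
  rw [step2]
  -- step 3 : simplify the integrand on the interval
  have step3 : (∫ θ in (-(π/2))..(π/2), (2*v*Real.cos θ) •
          (((Real.sqrt (4 * v ^ 2 - (2*v*Real.sin θ) ^ 2) : ℝ) : ℂ) * (((2*v*Real.sin θ:ℝ):ℂ) - z)⁻¹))
      = ∫ θ in (-(π/2))..(π/2),
          ((4 * (v:ℂ)^2 - z^2) * ((((2*v*Real.sin θ:ℝ)):ℂ) - z)⁻¹ - ((((2*v*Real.sin θ:ℝ)):ℂ) + z)) := by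
    apply intervalIntegral.integral_congr
    intro θ hθ
    have hθ' : θ ∈ Set.Icc (-(π/2)) (π/2) := by
      rwa [Set.uIcc_of_le (by linarith : -(π/2) ≤ π/2)] at hθ
    have hcos : 0 ≤ Real.cos θ := Real.cos_nonneg_of_mem_Icc hθ'
    dsimp only
    have hsqrt : Real.sqrt (4 * v ^ 2 - (2*v*Real.sin θ) ^ 2) = 2*v*Real.cos θ := by
      have h1 : 4 * v ^ 2 - (2*v*Real.sin θ) ^ 2 = (2*v*Real.cos θ)^2 := by
        have := Real.sin_sq_add_cos_sq θ
        nlinarith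
      rw [h1, Real.sqrt_sq (by positivity)]
    rw [hsqrt, Complex.real_smul]
    have hu := hlz (2*v*Real.sin θ)
    have hre : (2*v*Real.cos θ)^2 = 4*v^2 - (2*v*Real.sin θ)^2 := by
      nlinarith [Real.sin_sq_add_cos_sq θ]
    have hpyth : ((2*v*Real.cos θ:ℝ):ℂ)^2 = 4*(v:ℂ)^2 - (((2*v*Real.sin θ:ℝ)):ℂ)^2 := by
      exact_mod_cast hre
    set X : ℂ := (((2*v*Real.sin θ:ℝ)):ℂ) with hX
    set C : ℂ := (((2*v*Real.cos θ:ℝ)):ℂ) with hC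
    field_simp
    linear_combination hpyth
  rw [step3]
  -- step 4 : split the integral
  have hgcont : Continuous (fun θ : ℝ => (((2 * v * Real.sin θ : ℝ) : ℂ) - z)⁻¹) := by
    apply Continuous.inv₀
    · exact (Complex.continuous_ofReal.comp
        (continuous_const.mul Real.continuous_sin)).sub continuous_const
    · exact fun θ => hlz _
  have step4 : (∫ θ in (-(π/2))..(π/2),
          ((4 * (v:ℂ)^2 - z^2) * ((((2*v*Real.sin θ:ℝ)):ℂ) - z)⁻¹ - ((((2*v*Real.sin θ:ℝ)):ℂ) + z)))
      = (4 * (v:ℂ)^2 - z^2) * (∫ θ in (-(π/2))..(π/2), ((((2*v*Real.sin θ:ℝ)):ℂ) - z)⁻¹)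
        - (π:ℂ) * z := by
    have hcont_or : Continuous (fun θ : ℝ => (((2*v*Real.sin θ : ℝ)):ℂ)) := by
      continuity
    have hcont_add : Continuous (fun θ : ℝ => (((2*v*Real.sin θ:ℝ)):ℂ) + z) :=
      hcont_or.add continuous_const
    rw [intervalIntegral.integral_sub (f := fun θ : ℝ =>
        (4 * (v:ℂ)^2 - z^2) * ((((2*v*Real.sin θ:ℝ)):ℂ) - z)⁻¹)
      ((continuous_const.mul hgcont).intervalIntegrable _ _)
      (hcont_add.intervalIntegrable _ _),
      intervalIntegral.integral_const_mul]
    congr 1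
    have hADD : ∀ θ ∈ Set.uIcc (-(π/2)) (π/2),
        HasDerivAt (fun θ : ℝ => ((-(2*v)*Real.cos θ : ℝ):ℂ) + θ • z)
          ((((2*v*Real.sin θ:ℝ)):ℂ) + z) θ := by
      intro θ _
      have hd1 : HasDerivAt (fun θ : ℝ => -(2*v)*Real.cos θ) (2*v*Real.sin θ) θ := by
        simpa [mul_comm, neg_mul, mul_neg] using (Real.hasDerivAt_cos θ).const_mul (-(2*v))
      have hd1' := hd1.ofReal_comp
      have hd2 : HasDerivAt (fun θ : ℝ => θ • z) ((1:ℝ) • z) θ :=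
        (hasDerivAt_id θ).smul_const z
      convert hd1'.add hd2 using 1 <;> first | rfl | simp
    rw [intervalIntegral.integral_eq_sub_of_hasDerivAt hADD (hcont_add.intervalIntegrable _ _)]
    simp only [Real.cos_pi_div_two, Real.cos_neg]
    push_cast
    simp [Complex.real_smul]
    ring
  rw [step4]
  obtain ⟨S, hS2, hSJ⟩ := aux_J v hv z hz
  rw [hSJ]
  have hv' : (v:ℂ) ≠ 0 := by exact_mod_cast hv.ne'
  have hπ' : (π:ℂ) ≠ 0 := by exact_mod_cast hπ.ne'
  push_cast
  field_simp
  linear_combination hS2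

theorem aux_sign (v : ℝ) (hv : 0 < v) (z : ℂ) (hz : z.im ≠ 0) :
    0 ≤ (∫ l in Set.Icc (-(2 * v)) (2 * v),
        ((l : ℂ) - z)⁻¹ * ((1 / (2 * Real.pi * v ^ 2) * Real.sqrt (4 * v ^ 2 - l ^ 2) : ℝ) : ℂ)).im
      * z.im := by
  have hlz : ∀ l : ℝ, (l:ℂ) - z ≠ 0 := by
    intro l h; exact hz (by have := congrArg Complex.im h; simpa using this.symm)
  have hcont : Continuous fun l : ℝ =>
      ((l : ℂ) - z)⁻¹ * ((1 / (2 * Real.pi * v ^ 2) * Real.sqrt (4 * v ^ 2 - l ^ 2) : ℝ) : ℂ) := by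
    apply Continuous.mul
    · exact (Complex.continuous_ofReal.sub continuous_const).inv₀ hlz
    · exact Complex.continuous_ofReal.comp
        (continuous_const.mul (Real.continuous_sqrt.comp (by continuity)))
  have hint : MeasureTheory.IntegrableOn
      (fun l : ℝ => ((l : ℂ) - z)⁻¹ *
        ((1 / (2 * Real.pi * v ^ 2) * Real.sqrt (4 * v ^ 2 - l ^ 2) : ℝ) : ℂ))
      (Set.Icc (-(2 * v)) (2 * v)) :=
    hcont.continuousOn.integrableOn_Icc
  have key := ContinuousLinearMap.integral_comp_comm Complex.imCLM hint
  simp only [Complex.imCLM_apply] at key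
  rw [← key]
  have him : ∀ l : ℝ, (((l : ℂ) - z)⁻¹ *
      ((1 / (2 * Real.pi * v ^ 2) * Real.sqrt (4 * v ^ 2 - l ^ 2) : ℝ) : ℂ)).im
      = z.im * ((1 / (2 * Real.pi * v ^ 2) * Real.sqrt (4 * v ^ 2 - l ^ 2)) /
          Complex.normSq ((l:ℂ) - z)) := by
    intro l
    rw [Complex.mul_im, Complex.ofReal_im, Complex.ofReal_re, Complex.inv_im,
      Complex.sub_im, Complex.ofReal_im]
    ring
  simp only [him]
  rw [MeasureTheory.integral_const_mul]
  rw [mul_comm, ← mul_assoc]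
  apply mul_nonneg
  · nlinarith [sq_nonneg z.im]
  · apply MeasureTheory.integral_nonneg
    intro l
    have h1 : 0 ≤ Real.sqrt (4 * v ^ 2 - l ^ 2) := Real.sqrt_nonneg _
    have h2 : 0 ≤ Complex.normSq ((l:ℂ) - z) := Complex.normSq_nonneg _
    have h3 : 0 < Real.pi := Real.pi_pos
    positivity

/-- For `v > 0` and non-real `z`, the equation `w = 1/(-z - v²w)` has exactly one
solution with `Im w · Im z > 0`, and this solution is the Stieltjes transform of the
semicircle distribution of parameter `v`:
`w = ∫_{-2v}^{2v} (λ - z)⁻¹ ρ_sc(λ) dλ` with `ρ_sc(λ) = (2πv²)⁻¹ √(4v² - λ²)`. -/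
theorem semicircle_stieltjes_transform (v : ℝ) (hv : 0 < v) (z : ℂ) (hz : z.im ≠ 0) :
    (∃! w : ℂ, w = 1 / (-z - v ^ 2 * w) ∧ 0 < w.im * z.im) ∧
    (∀ w : ℂ, w = 1 / (-z - v ^ 2 * w) ∧ 0 < w.im * z.im →
      w = ∫ l in Set.Icc (-(2 * v)) (2 * v),
            ((l : ℂ) - z)⁻¹ *
              ((1 / (2 * Real.pi * v ^ 2) * Real.sqrt (4 * v ^ 2 - l ^ 2) : ℝ) : ℂ)) := by
  set M : ℂ := ∫ l in Set.Icc (-(2 * v)) (2 * v),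
      ((l : ℂ) - z)⁻¹ * ((1 / (2 * Real.pi * v ^ 2) * Real.sqrt (4 * v ^ 2 - l ^ 2) : ℝ) : ℂ)
    with hMdef
  have hquad : (v:ℂ)^2 * M^2 + z * M + 1 = 0 := aux_quad v hv z hz
  have hsign0 : 0 ≤ M.im * z.im := aux_sign v hv z hz
  -- M is a solution
  have hden : -z - (v:ℂ)^2 * M ≠ 0 := by
    intro h
    have h10 : (1:ℂ) = 0 := by linear_combination hquad + M * h
    exact one_ne_zero h10
  have hM : M = 1 / (-z - (v:ℂ)^2 * M) := by
    rw [eq_div_iff hden]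
    linear_combination -hquad
  have hMim : M.im ≠ 0 := by
    intro h0
    have h1 := congrArg Complex.im hquad
    simp only [Complex.add_im, Complex.mul_im, Complex.mul_re, pow_two, h0,
      Complex.one_im, Complex.zero_im, Complex.ofReal_im, Complex.ofReal_re,
      mul_zero, zero_mul, add_zero, zero_add, sub_zero, mul_comm] at h1
    have hre0 : M.re = 0 := by
      rcases mul_eq_zero.1 h1 with h | h
      · exact absurd h hz
      · exact h
    have hM0 : M = 0 := Complex.ext hre0 h0
    rw [hM0] at hquad
    simp at hquad
  have hsign : 0 < M.im * z.im :=
    lt_of_le_of_ne hsign0 (Ne.symm (mul_ne_zero hMim hz))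
  -- uniqueness
  have huniq : ∀ w : ℂ, (w = 1 / (-z - (v:ℂ) ^ 2 * w) ∧ 0 < w.im * z.im) → w = M := by
    rintro w ⟨hw, hwsign⟩
    have hdw : -z - (v:ℂ)^2 * w ≠ 0 := by
      intro h
      have hw0 : w = 0 := by rw [hw, h, div_zero]
      rw [hw0, mul_zero, sub_zero] at h
      exact hz (by simpa using congrArg Complex.im h)
    rw [eq_div_iff hdw] at hw
    have hquadw : (v:ℂ)^2 * w^2 + z * w + 1 = 0 := by linear_combination -hw
    have hfac : (w - M) * ((v:ℂ)^2*(w+M) + z) = 0 := by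
      linear_combination hquadw - hquad
    rcases mul_eq_zero.1 hfac with h | h
    · exact sub_eq_zero.1 h
    · exfalso
      have hwM : (v:ℂ)^2 * w * M = 1 := by linear_combination w*h - hquadw
      have hM0 : M ≠ 0 := fun h0 => hMim (by rw [h0]; rfl)
      have hv2 : ((v:ℂ)^2 : ℂ) ≠ 0 := by
        exact_mod_cast pow_ne_zero 2 (ne_of_gt hv)
      have hw_eq : w = ((v:ℂ)^2 * M)⁻¹ := by
        apply eq_inv_of_mul_eq_one_left
        linear_combination hwM
      have hQ : 0 < Complex.normSq ((v:ℂ)^2 * M) :=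
        Complex.normSq_pos.2 (mul_ne_zero hv2 hM0)
      have hmim : ((v:ℂ)^2 * M).im = v^2 * M.im := by
        simp [← Complex.ofReal_pow, Complex.mul_im]
      have hwim : w.im = -(v^2 * M.im) / Complex.normSq ((v:ℂ)^2 * M) := by
        rw [hw_eq, Complex.inv_im, hmim]
      rw [hwim] at hwsign
      have : -(v^2 * M.im) / Complex.normSq ((v:ℂ)^2 * M) * z.im
          = -(v^2 / Complex.normSq ((v:ℂ)^2 * M)) * (M.im * z.im) := by ring
      rw [this] at hwsign
      have hvQ : 0 < v^2 / Complex.normSq ((v:ℂ)^2 * M) := by positivity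
      nlinarith
  exact ⟨⟨M, ⟨hM, hsign⟩, huniq⟩, huniq⟩
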